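/- For every star expression e of the guarded-semilattice star fragment (GKAT syntax) and all b, c ⊆ At, if e ⇒ b then GS* ⊢ e^(c) = (0 +_b ∂e)^(c). -/

import Mathlib

/-- Star expressions for the theory of guarded semilattices (the syntax of
GKAT): `e ::= 0 | 1 | a | e1 +_b e2 | e1·e2 | e^(b)` with `b ⊆ At`. -/
inductive GExp (At A : Type) : Type
  | zero : GExp At A
  | one : GExp At A
  | act : A → GExp At A
  | add : Finset At → GExp At A → GExp At A → GExp At A
  | seq : GExp At A → GExp At A → GExp At A
  | star : Finset At → GExp At A → GExp At A
  deriving DecidableEq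

namespace GExp

variable {At A : Type} [Fintype At] [DecidableEq At] [DecidableEq A]

/-- The small-step semantics `ℓ(e) : At → {⊥} ⊕ {✓} ⊕ (A × GExp)`, where
`⊥` is represented as `none`, `✓` as `some none`, and a transition `(a, e')`
as `some (some (a, e'))`. -/
def ell : GExp At A → At → Option (Option (A × GExp At A))
  | zero, _ => none
  | one, _ => some none
  | act a, _ => some (some (a, one))
  | add b e f, ξ => if ξ ∈ b then ell e ξ else ell f ξ
  | seq e f, ξ =>
      match ell e ξ with
      | none => none
      | some none => ell f ξ
      | some (some (a, e')) => some (some (a, seq e' f))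
  | star b e, ξ =>
      if ξ ∈ b then
        match ell e ξ with
        | some (some (a, e')) => some (some (a, seq e' (star b e)))
        | _ => none
      else some none

/-- The set of atoms at which `e` immediately accepts; `e ⇒ b` means
`acc e = b`. -/
def acc (e : GExp At A) : Finset At :=
  Finset.univ.filter (fun ξ => ell e ξ = some none)

/-- Guardedness of star expressions. -/
def Guarded : GExp At A → Prop
  | zero => True
  | one => False
  | act _ => True
  | add _ e f => Guarded e ∧ Guarded f
  | seq e f => Guarded e ∨ Guarded f
  | star _ _ => False

/-- Derivability `GS* ⊢ e = f` in equational logic from the guarded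
semilattice axioms, the sequencing axioms, the axiom
`(e +_c 1)^(b) = (e +_c 0)^(b)`, the guarded unrolling axiom, and the
fixpoint rule. -/
inductive GSd : GExp At A → GExp At A → Prop
  | refl (e) : GSd e e
  | symm {e f} : GSd e f → GSd f e
  | trans {e f g} : GSd e f → GSd f g → GSd e g
  | addCongr (b) {e1 f1 e2 f2} :
      GSd e1 f1 → GSd e2 f2 → GSd (add b e1 e2) (add b f1 f2)
  | seqCongr {e1 f1 e2 f2} : GSd e1 f1 → GSd e2 f2 → GSd (seq e1 e2) (seq f1 f2)
  | starCongr (b) {e f} : GSd e f → GSd (star b e) (star b f)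
  | gs1 (b e) : GSd (add b e e) e
  | gs2 (e f) : GSd (add Finset.univ e f) e
  | gs3 (b e f) : GSd (add b e f) (add bᶜ f e)
  | gs4 (b c e f g) : GSd (add c (add b e f) g) (add (b ∩ c) e (add c f g))
  | oneSeq (e) : GSd (seq one e) e
  | seqOne (e) : GSd (seq e one) e
  | zeroSeq (e) : GSd (seq zero e) zero
  | seqAssoc (e f g) : GSd (seq e (seq f g)) (seq (seq e f) g)
  | distR (b e f g) : GSd (seq (add b e f) g) (add b (seq e g) (seq f g))
  | starOne (b c e) : GSd (star b (add c e one)) (star b (add c e zero))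
  | unroll (b) {e} : Guarded e → GSd (star b e) (add b (seq e (star b e)) one)
  | fix (b) {e f g} : GSd g (add b (seq e g) f) → Guarded e → GSd g (seq (star b e) f)

/-- The derivative `∂e`: `∂0 = 0`, `∂1 = 0`, `∂a = a`,
`∂(e +_c f) = ∂e +_c ∂f`, and, when `e ⇒ b`, `∂(e·f) = ∂f +_b ∂e·f` and
`∂(e^(c)) = 0 +_b ∂e·e^(c)`. -/
def deriv : GExp At A → GExp At A
  | zero => zero
  | one => zero
  | act a => act a
  | add c e f => add c (deriv e) (deriv f)
  | seq e f => add (acc e) (deriv f) (seq (deriv e) f)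
  | star c e => add (acc e) zero (seq (deriv e) (star c e))

namespace GSd

-- flipped gs3
theorem flip' (b : Finset At) (e f : GExp At A) : GSd (add bᶜ f e) (add b e f) := by
  have h := gs3 bᶜ f e
  rwa [compl_compl] at h

theorem addUniv (e f : GExp At A) : GSd (add Finset.univ e f) e := gs2 e f

theorem addEmpty (e f : GExp At A) : GSd (add ∅ e f) f := by
  have h := flip' Finset.univ f e
  rw [Finset.compl_univ] at h
  exact h.trans (gs2 f e)

/-- Changing the test of a nested else-branch, as long as it agrees outside `p`. -/
theorem elseTest {p r r' : Finset At} (h : r ∩ pᶜ = r' ∩ pᶜ) (e f g : GExp At A) :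
    GSd (add p e (add r f g)) (add p e (add r' f g)) := by
  have step : ∀ s : Finset At,
      GSd (add p e (add s f g)) (add (s ∩ pᶜ) f (add pᶜ g e)) := fun s =>
    (gs3 p e (add s f g)).trans (gs4 s pᶜ f g e)
  exact (step r).trans (h ▸ (step r').symm)

/-- Merging a duplicated leaf: `x +_{p∪q} w = x +_p (x +_q w)`. -/
theorem unionX (p q : Finset At) (x w : GExp At A) :
    GSd (add (p ∪ q) x w) (add p x (add q x w)) := by
  have hb : (p ∪ (p ∪ q)ᶜ) ∩ (p ∪ q) = p := by
    ext ξ; simp; tauto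
  have h1 := gs4 (p ∪ (p ∪ q)ᶜ) (p ∪ q) x x w
  rw [hb] at h1
  have h2 : GSd (add (p ∪ q) x w) (add (p ∪ q) (add (p ∪ (p ∪ q)ᶜ) x x) w) :=
    addCongr _ (gs1 _ x).symm (refl w)
  have h3 : GSd (add p x (add (p ∪ q) x w)) (add p x (add q x w)) :=
    elseTest (by ext ξ; simp; tauto) x x w
  exact h2.trans (h1.trans h3)

/-- Pulling a shared leaf out of a conditional. -/
theorem mergeAdd (c b1 b2 : Finset At) (x y z : GExp At A) :
    GSd (add c (add b1 x y) (add b2 x z))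
      (add (b1 ∩ c ∪ b2 ∩ cᶜ) x (add c y z)) := by
  have h1 := gs4 b1 c x y (add b2 x z)
  have h2 : GSd (add c y (add b2 x z)) (add (b2 ∩ cᶜ) x (add c y z)) := by
    refine ((gs3 c y (add b2 x z)).trans (gs4 b2 cᶜ x z y)).trans ?_
    exact addCongr _ (refl x) (flip' c y z)
  exact (h1.trans (addCongr _ (refl x) h2)).trans (unionX _ _ x (add c y z)).symm

end GSd

@[simp] theorem acc_zero : acc (zero : GExp At A) = ∅ := by
  ext ξ; simp [acc, ell]

@[simp] theorem acc_one : acc (one : GExp At A) = Finset.univ := by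
  ext ξ; simp [acc, ell]

@[simp] theorem acc_act (a : A) : acc (act a : GExp At A) = ∅ := by
  ext ξ; simp [acc, ell]

@[simp] theorem acc_add (c : Finset At) (e f : GExp At A) :
    acc (add c e f) = c ∩ acc e ∪ cᶜ ∩ acc f := by
  ext ξ
  by_cases h : ξ ∈ c <;> simp only [acc, Finset.mem_filter, Finset.mem_univ, true_and, Finset.mem_inter, Finset.mem_union, Finset.mem_compl] <;> simp [ell, h]

@[simp] theorem acc_seq (e f : GExp At A) : acc (seq e f) = acc e ∩ acc f := by
  ext ξ
  rcases he : ell e ξ with _ | _ | ⟨a, e'⟩ <;> simp only [acc, Finset.mem_filter, Finset.mem_univ, true_and, Finset.mem_inter, Finset.mem_union, Finset.mem_compl] <;> simp [ell, he]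

@[simp] theorem acc_star (c : Finset At) (e : GExp At A) : acc (star c e) = cᶜ := by
  ext ξ
  by_cases h : ξ ∈ c <;>
    rcases he : ell e ξ with _ | _ | ⟨a, e'⟩ <;> simp [acc, ell, h, he]

theorem guarded_deriv (e : GExp At A) : Guarded (deriv e) := by
  induction e with
  | zero => trivial
  | one => trivial
  | act a => trivial
  | add c e f ihe ihf => exact ⟨ihe, ihf⟩
  | seq e f ihe ihf => exact ⟨ihf, Or.inl ihe⟩
  | star c e ihe => exact ⟨trivial, Or.inl ihe⟩

/-- Derived form of the main theorem, from the fundamental identity of `e`. -/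
theorem star_deriv_of_fund {e : GExp At A} (c : Finset At)
    (h : GSd e (add (acc e) one (deriv e))) :
    GSd (star c e) (star c (add (acc e) zero (deriv e))) := by
  refine (GSd.starCongr c h).trans ?_
  refine (GSd.starCongr c (GSd.gs3 (acc e) one (deriv e))).trans ?_
  refine (GSd.starOne c (acc e)ᶜ (deriv e)).trans ?_
  exact GSd.starCongr c (GSd.flip' (acc e) zero (deriv e))

/-- The fundamental theorem: `e ≡ 1 +_{acc e} ∂e`. -/
theorem fund (e : GExp At A) : GSd e (add (acc e) one (deriv e)) := by
  induction e with
  | zero =>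
      rw [acc_zero]; exact (GSd.addEmpty one zero).symm
  | one =>
      rw [acc_one]; exact (GSd.gs2 one zero).symm
  | act a =>
      rw [acc_act]; exact (GSd.addEmpty one (act a)).symm
  | add c e f ihe ihf =>
      rw [acc_add]
      refine (GSd.addCongr c ihe ihf).trans ?_
      refine (GSd.mergeAdd c (acc e) (acc f) one (deriv e) (deriv f)).trans ?_
      rw [Finset.inter_comm (acc e) c, Finset.inter_comm (acc f) cᶜ]
      exact GSd.refl _
  | seq e f ihe ihf =>
      rw [acc_seq]
      refine (GSd.seqCongr ihe (GSd.refl f)).trans ?_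
      refine (GSd.distR (acc e) one (deriv e) f).trans ?_
      refine (GSd.addCongr _ (GSd.oneSeq f) (GSd.refl _)).trans ?_
      refine (GSd.addCongr _ ihf (GSd.refl _)).trans ?_
      have h := GSd.gs4 (acc f) (acc e) one (deriv f) (seq (deriv e) f)
      rwa [Finset.inter_comm (acc f) (acc e)] at h
  | star c e ihe =>
      rw [acc_star]
      have h0 : GSd (star c e) (star c (add (acc e) zero (deriv e))) :=
        star_deriv_of_fund c ihe
      have hg : Guarded (add (acc e) zero (deriv e)) := ⟨trivial, guarded_deriv e⟩
      refine (h0.trans (GSd.unroll c hg)).trans ?_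
      refine GSd.trans ?_ (GSd.gs3 c _ one)
      refine GSd.addCongr c ?_ (GSd.refl one)
      refine (GSd.distR (acc e) zero (deriv e) _).trans ?_
      exact GSd.addCongr _ (GSd.zeroSeq _) (GSd.seqCongr (GSd.refl _) h0.symm)

end GExp

/-- For every star expression `e` of the guarded-semilattice star fragment
(GKAT syntax) and all `b, c ⊆ At`: if `e ⇒ b` then
`GS* ⊢ e^(c) = (0 +_b ∂e)^(c)`. -/
theorem gs_star_deriv {At A : Type} [Fintype At] [DecidableEq At]
    [DecidableEq A] (e : GExp At A) (b c : Finset At) (hb : GExp.acc e = b) :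
    GExp.GSd (GExp.star c e) (GExp.star c (GExp.add b GExp.zero (GExp.deriv e))) := by
  subst hb
  exact GExp.star_deriv_of_fund c (GExp.fund e)
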